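/- Let L ≥ 1 and define f : ℝ^{2L} → ℝ^{2L} by f(x_1,…,x_L,y_1,…,y_L) = (Σ_{ℓ=1}^L x_ℓ, Σ_{ℓ=1}^L x_ℓ y_ℓ, …, Σ_{ℓ=1}^L x_ℓ y_ℓ^{2L−1}). Let c_1, …, c_L be nonzero reals and ρ_1, …, ρ_L pairwise distinct reals. Then f is a local diffeomorphism at the point p = (c_1,…,c_L,ρ_1,…,ρ_L): there exist open sets U ∋ p and V ∋ f(p) such that f restricts to a bijection from U onto V whose inverse is continuously differentiable. -/

import Mathlib

open Polynomial Finset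

lemma aux_S_vanish {L : ℕ} (c ρ dx dy : Fin L → ℝ) {n : ℕ}
    (h : ∀ k : ℕ, k < n →
      ∑ ℓ, (ρ ℓ ^ k * dx ℓ + c ℓ * k * ρ ℓ ^ (k - 1) * dy ℓ) = 0)
    (q : ℝ[X]) (hq : q.natDegree < n) :
    ∑ ℓ, (dx ℓ * q.eval (ρ ℓ) + c ℓ * dy ℓ * (Polynomial.derivative q).eval (ρ ℓ)) = 0 := by
  classical
  let S : ℝ[X] →ₗ[ℝ] ℝ :=
    ∑ ℓ, (dx ℓ • Polynomial.leval (ρ ℓ)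
      + (c ℓ * dy ℓ) • (Polynomial.leval (ρ ℓ)).comp
          (Polynomial.derivative : ℝ[X] →ₗ[ℝ] ℝ[X]))
  have hSapp : ∀ r : ℝ[X], S r =
      ∑ ℓ, (dx ℓ * r.eval (ρ ℓ) + c ℓ * dy ℓ * (Polynomial.derivative r).eval (ρ ℓ)) := by
    intro r
    simp [S, smul_eq_mul]
  have hX : ∀ k : ℕ, k < n → S (X ^ k) = 0 := by
    intro k hk
    rw [hSapp]
    rw [← h k hk]
    refine Finset.sum_congr rfl fun ℓ _ => ?_
    simp [Polynomial.derivative_X_pow]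
    ring
  have : S q = 0 := by
    conv_lhs => rw [q.as_sum_range' n hq]
    rw [map_sum]
    refine Finset.sum_eq_zero fun k hk => ?_
    rw [← Polynomial.smul_X_eq_monomial, map_smul, hX k (Finset.mem_range.mp hk), smul_zero]
  rw [← hSapp]; exact this

lemma aux_inj {L : ℕ} (hL : 1 ≤ L) (c ρ : Fin L → ℝ) (hc : ∀ j, c j ≠ 0)
    (hρ : Function.Injective ρ) (dx dy : Fin L → ℝ)
    (h : ∀ k : ℕ, k < 2 * L →
      ∑ ℓ, (ρ ℓ ^ k * dx ℓ + c ℓ * k * ρ ℓ ^ (k - 1) * dy ℓ) = 0) :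
    ∀ ℓ, dx ℓ = 0 ∧ dy ℓ = 0 := by
  classical
  set g : Fin L → ℝ[X] := fun ℓ0 => ∏ j ∈ Finset.univ.erase ℓ0, (X - C (ρ j)) with hg
  have hgdeg : ∀ ℓ0, (g ℓ0).natDegree ≤ L - 1 := by
    intro ℓ0
    refine le_trans (Polynomial.natDegree_prod_le _ _) ?_
    have : ∀ j ∈ Finset.univ.erase ℓ0, (X - C (ρ j)).natDegree = 1 :=
      fun j _ => natDegree_X_sub_C _
    rw [Finset.sum_congr rfl this, Finset.sum_const, smul_eq_mul, mul_one,
      Finset.card_erase_of_mem (Finset.mem_univ _), Finset.card_univ, Fintype.card_fin]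
  have hgval : ∀ ℓ0, (g ℓ0).eval (ρ ℓ0) ≠ 0 := by
    intro ℓ0
    rw [hg, eval_prod]
    refine Finset.prod_ne_zero_iff.mpr fun j hj => ?_
    simp only [eval_sub, eval_X, eval_C, sub_ne_zero]
    exact fun hEq => (Finset.mem_erase.mp hj).1 (hρ hEq.symm)
  have hgz : ∀ ℓ0 ℓ, ℓ ≠ ℓ0 → (g ℓ0).eval (ρ ℓ) = 0 := by
    intro ℓ0 ℓ hne
    rw [hg, eval_prod]
    exact Finset.prod_eq_zero (Finset.mem_erase.mpr ⟨hne, Finset.mem_univ _⟩) (by simp)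
  have hdy : ∀ ℓ0, dy ℓ0 = 0 := by
    intro ℓ0
    set q : ℝ[X] := (X - C (ρ ℓ0)) * (g ℓ0) ^ 2 with hqdef
    have hqdeg : q.natDegree < 2 * L := by
      have h1 : q.natDegree ≤ (X - C (ρ ℓ0)).natDegree + ((g ℓ0) ^ 2).natDegree := by
        rw [hqdef]; exact Polynomial.natDegree_mul_le
      have h2 := Polynomial.natDegree_pow_le (p := g ℓ0) (n := 2)
      have h3 := hgdeg ℓ0
      have hx : (X - C (ρ ℓ0)).natDegree = 1 := natDegree_X_sub_C _
      omega
    have hmain := aux_S_vanish c ρ dx dy h q hqdeg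
    have hder : Polynomial.derivative q =
        (g ℓ0) ^ 2 + (X - C (ρ ℓ0)) * (C 2 * (g ℓ0) ^ 1 * Polynomial.derivative (g ℓ0)) := by
      rw [hqdef, derivative_mul, derivative_X_sub_C, one_mul, derivative_pow]
      norm_num
    rw [Finset.sum_eq_single ℓ0 (fun b _ hb => by
        simp [q, hgz ℓ0 b hb, hder]) (fun hmem => absurd (Finset.mem_univ ℓ0) hmem)] at hmain
    simp only [q, hder, eval_add, eval_mul, eval_sub, eval_X, eval_C, eval_pow, sub_self,
      zero_mul, mul_zero, add_zero, zero_add] at hmain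
    have hne : c ℓ0 * (g ℓ0).eval (ρ ℓ0) ^ 2 ≠ 0 :=
      mul_ne_zero (hc ℓ0) (pow_ne_zero 2 (hgval ℓ0))
    have : dy ℓ0 * (c ℓ0 * (g ℓ0).eval (ρ ℓ0) ^ 2) = 0 := by linear_combination hmain
    exact (mul_eq_zero.mp this).resolve_right hne
  have hdx : ∀ ℓ0, dx ℓ0 = 0 := by
    intro ℓ0
    set r : ℝ[X] := (g ℓ0) ^ 2 with hrdef
    have hrdeg : r.natDegree < 2 * L := by
      have h2 : r.natDegree ≤ 2 * (g ℓ0).natDegree := by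
        rw [hrdef]; exact Polynomial.natDegree_pow_le
      have h3 := hgdeg ℓ0
      omega
    have hmain := aux_S_vanish c ρ dx dy h r hrdeg
    simp only [hdy, mul_zero, zero_mul, add_zero] at hmain
    rw [Finset.sum_eq_single ℓ0 (fun b _ hb => by
        simp [r, hgz ℓ0 b hb]) (fun hmem => absurd (Finset.mem_univ ℓ0) hmem)] at hmain
    simp only [r, eval_pow] at hmain
    have hne : (g ℓ0).eval (ρ ℓ0) ^ 2 ≠ 0 := pow_ne_zero 2 (hgval ℓ0)
    exact (mul_eq_zero.mp hmain).resolve_right hne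
  exact fun ℓ => ⟨hdx ℓ, hdy ℓ⟩


/-- The moment map sending weights `x` and nodes `y` to the power sums
`(∑_ℓ x_ℓ y_ℓ^k)_{k = 0, …, 2L-1}`. -/
noncomputable def momentMap (L : ℕ) :
    (Fin L → ℝ) × (Fin L → ℝ) → (Fin (2 * L) → ℝ) :=
  fun p k => ∑ ℓ, p.1 ℓ * p.2 ℓ ^ (k : ℕ)

/-- **The moment map is a local diffeomorphism at `(c, ρ)`** when the weights `c_ℓ` are
nonzero and the nodes `ρ_ℓ` are pairwise distinct: there are open sets `U ∋ (c, ρ)` and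
`V ∋ f (c, ρ)` such that `f` maps `U` bijectively onto `V`, with a continuously
differentiable inverse on `V`. -/
theorem momentMap_local_diffeo (L : ℕ) (hL : 1 ≤ L)
    (c ρ : Fin L → ℝ) (hc : ∀ j, c j ≠ 0) (hρ : Function.Injective ρ) :
    ∃ (U : Set ((Fin L → ℝ) × (Fin L → ℝ))) (V : Set (Fin (2 * L) → ℝ)),
      IsOpen U ∧ IsOpen V ∧ (c, ρ) ∈ U ∧ momentMap L (c, ρ) ∈ V ∧
      Set.BijOn (momentMap L) U V ∧
      ∃ g : (Fin (2 * L) → ℝ) → (Fin L → ℝ) × (Fin L → ℝ),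
        ContDiffOn ℝ 1 g V ∧
        (∀ p ∈ U, g (momentMap L p) = p) ∧
        (∀ v ∈ V, momentMap L (g v) = v) := by
  classical
  set E := (Fin L → ℝ) × (Fin L → ℝ)
  -- the candidate derivative
  set Pf : Fin L → (E →L[ℝ] ℝ) := fun ℓ => (ContinuousLinearMap.proj ℓ).comp
    (ContinuousLinearMap.fst ℝ (Fin L → ℝ) (Fin L → ℝ)) with hPf
  set Ps : Fin L → (E →L[ℝ] ℝ) := fun ℓ => (ContinuousLinearMap.proj ℓ).comp
    (ContinuousLinearMap.snd ℝ (Fin L → ℝ) (Fin L → ℝ)) with hPs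
  set D : E →L[ℝ] (Fin (2 * L) → ℝ) :=
    ContinuousLinearMap.pi fun k : Fin (2 * L) =>
      ∑ ℓ : Fin L, ((ρ ℓ ^ (k : ℕ)) • Pf ℓ
        + (c ℓ * ((k : ℕ) : ℝ) * ρ ℓ ^ ((k : ℕ) - 1)) • Ps ℓ) with hD
  have hDapp : ∀ (v : E) (k : Fin (2 * L)),
      D v k = ∑ ℓ, (ρ ℓ ^ (k : ℕ) * v.1 ℓ
        + c ℓ * ((k : ℕ) : ℝ) * ρ ℓ ^ ((k : ℕ) - 1) * v.2 ℓ) := by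
    intro v k
    simp [hD, hPf, hPs, ContinuousLinearMap.pi_apply, ContinuousLinearMap.sum_apply,
      smul_eq_mul]
    rfl
  -- smoothness
  have hsmooth : ContDiff ℝ 1 (momentMap L) := by
    rw [show momentMap L = fun p : E => fun k : Fin (2 * L) => ∑ ℓ, p.1 ℓ * p.2 ℓ ^ (k : ℕ)
      from rfl]
    refine contDiff_pi.mpr fun k => ContDiff.sum fun ℓ _ => ContDiff.mul ?_ ?_
    · exact (Pf ℓ).contDiff
    · exact (Ps ℓ).contDiff.pow _
  -- `D` is the derivative at `(c, ρ)`
  have hfd : HasFDerivAt (momentMap L) D (c, ρ) := by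
    rw [show momentMap L = fun p : E => fun k : Fin (2 * L) => ∑ ℓ, p.1 ℓ * p.2 ℓ ^ (k : ℕ)
      from rfl]
    rw [hasFDerivAt_pi']
    intro k
    rw [hD, ContinuousLinearMap.proj_pi]
    refine HasFDerivAt.fun_sum fun ℓ _ => ?_
    have h1 : HasFDerivAt (fun p : E => p.1 ℓ) (Pf ℓ) (c, ρ) := (Pf ℓ).hasFDerivAt
    have h2 : HasFDerivAt (fun p : E => p.2 ℓ) (Ps ℓ) (c, ρ) := (Ps ℓ).hasFDerivAt
    have h3 : HasFDerivAt (fun p : E => p.2 ℓ ^ (k : ℕ))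
        ((((k : ℕ) : ℝ) * ρ ℓ ^ ((k : ℕ) - 1)) • Ps ℓ) (c, ρ) :=
      HasDerivAt.comp_hasFDerivAt _ (hasDerivAt_pow (k : ℕ) (ρ ℓ)) h2
    have h4 := h1.mul h3
    refine h4.congr_fderiv ?_
    rw [smul_smul]
    ring_nf
    module
  -- injectivity of `D`
  have hDinj : Function.Injective D := by
    rw [injective_iff_map_eq_zero]
    intro v hv
    have hk : ∀ k : ℕ, k < 2 * L →
        ∑ ℓ, (ρ ℓ ^ k * v.1 ℓ + c ℓ * k * ρ ℓ ^ (k - 1) * v.2 ℓ) = 0 := by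
      intro k hkn
      have := congrFun hv ⟨k, hkn⟩
      rw [hDapp v ⟨k, hkn⟩] at this
      simpa using this
    have := aux_inj hL c ρ hc hρ v.1 v.2 hk
    have h1 : v.1 = 0 := funext fun ℓ => (this ℓ).1
    have h2 : v.2 = 0 := funext fun ℓ => (this ℓ).2
    exact Prod.ext h1 h2
  -- upgrade to a continuous linear equivalence
  have hfr : Module.finrank ℝ E = Module.finrank ℝ (Fin (2 * L) → ℝ) := by
    simp [E, Module.finrank_prod]
    ring
  let eLin := LinearMap.linearEquivOfInjective (D : E →ₗ[ℝ] (Fin (2 * L) → ℝ)) hDinj hfr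
  let eL : E ≃L[ℝ] (Fin (2 * L) → ℝ) := eLin.toContinuousLinearEquiv
  have heL : (eL : E →L[ℝ] (Fin (2 * L) → ℝ)) = D := by
    apply ContinuousLinearMap.ext
    intro v
    exact LinearMap.linearEquivOfInjective_apply hDinj hfr v
  have hcd : ContDiffAt ℝ 1 (momentMap L) (c, ρ) := hsmooth.contDiffAt
  have hfd' : HasFDerivAt (momentMap L) (eL : E →L[ℝ] (Fin (2 * L) → ℝ)) (c, ρ) := by
    rw [heL]; exact hfd
  -- inverse function theorem
  set Φ := hcd.toOpenPartialHomeomorph (momentMap L) hfd' one_ne_zero with hΦ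
  have hΦcoe : (Φ : E → (Fin (2 * L) → ℝ)) = momentMap L := rfl
  have hsrc : (c, ρ) ∈ Φ.source := hcd.mem_toOpenPartialHomeomorph_source hfd' one_ne_zero
  have htgt : momentMap L (c, ρ) ∈ Φ.target :=
    hcd.image_mem_toOpenPartialHomeomorph_target hfd' one_ne_zero
  have hinv : ContDiffAt ℝ 1 (Φ.symm) (momentMap L (c, ρ)) :=
    hcd.to_localInverse hfd' one_ne_zero
  obtain ⟨W, hWmem, hWsub, hWcd⟩ := hinv.contDiffWithinAt.contDiffOn le_rfl (by simp)
  rw [Set.insert_eq_of_mem (Set.mem_univ _), nhdsWithin_univ] at hWmem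
  obtain ⟨W', hW'sub, hW'open, hW'mem⟩ := mem_nhds_iff.mp hWmem
  refine ⟨Φ.source ∩ momentMap L ⁻¹' (Φ.target ∩ W'), Φ.target ∩ W',
    ?_, ?_, ⟨hsrc, htgt, hW'mem⟩, ⟨htgt, hW'mem⟩, ?_, Φ.symm, ?_, ?_, ?_⟩
  · exact Φ.open_source.inter ((Φ.open_target.inter hW'open).preimage hsmooth.continuous)
  · exact Φ.open_target.inter hW'open
  · refine ⟨fun p hp => hp.2, fun p hp q hq hpq => Φ.injOn hp.1 hq.1 hpq, fun v hv => ?_⟩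
    refine ⟨Φ.symm v, ⟨Φ.map_target hv.1, ?_⟩, Φ.right_inv hv.1⟩
    refine Set.mem_preimage.mpr ?_
    rw [show momentMap L (Φ.symm v) = v from Φ.right_inv hv.1]
    exact hv
  · exact (hWcd.mono (fun v hv => hW'sub hv.2)).of_le le_rfl
  · exact fun p hp => Φ.left_inv hp.1
  · exact fun v hv => Φ.right_inv hv.1
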